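/- Let ξ₀, η₀ ∈ ℂ, r₀ ∈ ℝ, and let (z₀,t₀) = P(ξ₀,η₀,r₀). Then for every ξ ∈ ℂ one has (1/2)(z₀ − 2t₀ξ − z̄₀ξ²) = ((1 + ξ̄₀ξ)²η₀ − (ξ₀ − ξ)²η̄₀ + (ξ₀ − ξ)(1 + ξ̄₀ξ)(1 + ξ₀ξ̄₀)r₀)/(1 + ξ₀ξ̄₀)². In other words, the twistor coordinate of any oriented line of direction ξ passing through the point P(ξ₀,η₀,r₀) is given by this expression. -/

import Mathlib

open ComplexConjugate

/-- The point of `ℝ³ = ℂ × ℝ` on the oriented line with twistor data `(ξ, η)`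
at signed distance `r` from the point of the line closest to the origin. -/
noncomputable def twistorPoint (ξ η : ℂ) (r : ℝ) : ℂ × ℝ :=
  ((2 * (η - conj η * ξ ^ 2) + 2 * ξ * (1 + ξ * conj ξ) * (r : ℂ)) / (1 + ξ * conj ξ) ^ 2,
   (((-2 * (η * conj ξ + conj η * ξ) + (1 - ξ ^ 2 * (conj ξ) ^ 2) * (r : ℂ)) /
      (1 + ξ * conj ξ) ^ 2).re))

/-- the twistor coordinate `½(z₀ − 2t₀ξ − z̄₀ξ²)` of any oriented line of
direction `ξ` through the point `(z₀, t₀) = twistorPoint ξ₀ η₀ r₀` is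
`((1 + ξ̄₀ξ)²η₀ − (ξ₀ − ξ)²η̄₀ + (ξ₀ − ξ)(1 + ξ̄₀ξ)(1 + ξ₀ξ̄₀)r₀)/(1 + ξ₀ξ̄₀)²`. -/
theorem twistor_coordinate_through_point (ξ₀ η₀ : ℂ) (r₀ : ℝ) (z₀ : ℂ) (t₀ : ℝ)
    (h : (z₀, t₀) = twistorPoint ξ₀ η₀ r₀) :
    ∀ ξ : ℂ,
      (1 / 2) * (z₀ - 2 * (t₀ : ℂ) * ξ - conj z₀ * ξ ^ 2) =
        ((1 + conj ξ₀ * ξ) ^ 2 * η₀ - (ξ₀ - ξ) ^ 2 * conj η₀ +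
            (ξ₀ - ξ) * (1 + conj ξ₀ * ξ) * (1 + ξ₀ * conj ξ₀) * (r₀ : ℂ)) /
          (1 + ξ₀ * conj ξ₀) ^ 2 := by
  intro ξ
  obtain ⟨hz, ht⟩ := Prod.mk.injEq .. ▸ h
  have hd : (1 + ξ₀ * conj ξ₀) ≠ 0 := by
    have h0 : (0:ℝ) < 1 + Complex.normSq ξ₀ := by have := Complex.normSq_nonneg ξ₀; linarith
    rw [Complex.mul_conj]
    exact_mod_cast h0.ne'
  have hd' : (1 + conj ξ₀ * ξ₀) ≠ 0 := by rwa [mul_comm]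
  set T : ℂ := (-2 * (η₀ * conj ξ₀ + conj η₀ * ξ₀) + (1 - ξ₀ ^ 2 * (conj ξ₀) ^ 2) * (r₀ : ℂ)) /
      (1 + ξ₀ * conj ξ₀) ^ 2 with hT
  have hTreal : ((T.re : ℂ)) = T := by
    rw [← Complex.conj_eq_iff_re]
    rw [hT]
    simp only [map_div₀, map_add, map_mul, map_sub, map_pow, map_one, map_neg, map_ofNat,
      Complex.conj_conj, Complex.conj_ofReal]
    field_simp [hd, hd']
    ring
  have ht' : (t₀ : ℂ) = T := by rw [ht, hTreal]
  rw [hz, ht', hT]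
  simp only [twistorPoint, map_div₀, map_add, map_mul, map_sub, map_pow, map_one, map_ofNat,
    Complex.conj_conj, Complex.conj_ofReal]
  field_simp [hd, hd']
  ring
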